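/- Let d, dh, h, N be positive integers with 2 ≤ h and h * dh ≤ d. For each i = 1,…,h let Qᵢ, Kᵢ, Vᵢ ∈ ℝ^{d×dh}, and define the i-th attention head headᵢ(X) = rowSoftmax(X Qᵢ Kᵢᵀ Xᵀ) · (X Vᵢ) for X ∈ ℝ^{N×d}, where for a matrix S ∈ ℝ^{N×N}, rowSoftmax(S)_{jk} = exp(S_{jk}) / Σ_{l} exp(S_{jl}). Assume: (1) Qᵢ Kᵢᵀ is a symmetric matrix for every i; (2) the row space of Vᵢᵀ is contained in the row space of Qᵢ Kᵢᵀ for every i; (3) there exist indices m ≠ m' and a row index k such that the k-th row of Q_m K_mᵀ is nonzero and lies in the row space of Q_{m'} K_{m'}ᵀ. Then there exists a matrix W ∈ ℝ^{N×d} with W ≠ 0 such that headᵢ(X + W) = headᵢ(X) for every i = 1,…,h and every X ∈ ℝ^{N×d}. -/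

import Mathlib

open Matrix

/-- Row-wise softmax of a square matrix. -/
noncomputable def rowSoftmax {N : ℕ} (S : Matrix (Fin N) (Fin N) ℝ) :
    Matrix (Fin N) (Fin N) ℝ :=
  Matrix.of fun j k => Real.exp (S j k) / ∑ l, Real.exp (S j l)

/-- A self-attention head with query, key, value matrices `Q K V : ℝ^{d×dh}`,
applied to `X : ℝ^{N×d}`. -/
noncomputable def attnHead {d dh N : ℕ} (Q K V : Matrix (Fin d) (Fin dh) ℝ)
    (X : Matrix (Fin N) (Fin d) ℝ) : Matrix (Fin N) (Fin dh) ℝ :=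
  rowSoftmax (X * Q * Kᵀ * Xᵀ) * (X * V)

/-- The row space of a matrix: the span of its rows, i.e. the range of `x ↦ Aᵀ x`. -/
def rowSpace {m n : ℕ} (A : Matrix (Fin m) (Fin n) ℝ) : Submodule ℝ (Fin n → ℝ) :=
  LinearMap.range (Matrix.mulVecLin Aᵀ)

lemma rowSpace_eq_span {m n : ℕ} (A : Matrix (Fin m) (Fin n) ℝ) :
    rowSpace A = Submodule.span ℝ (Set.range A) := by
  rw [rowSpace, Matrix.range_mulVecLin]; rfl

lemma finrank_sup_le' {M : Type*} [AddCommGroup M] [Module ℝ M]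
    (S T : Submodule ℝ M) [FiniteDimensional ℝ S] [FiniteDimensional ℝ T] :
    Module.finrank ℝ ↥(S ⊔ T) ≤ Module.finrank ℝ S + Module.finrank ℝ T := by
  have := Submodule.finrank_sup_add_finrank_inf_eq S T
  omega

lemma finrank_finset_sup_le {ι : Type*} {M : Type*} [AddCommGroup M] [Module ℝ M]
    [FiniteDimensional ℝ M] (s : Finset ι) (f : ι → Submodule ℝ M) :
    Module.finrank ℝ ↥(s.sup f) ≤ ∑ i ∈ s, Module.finrank ℝ (f i) := by
  classical
  induction s using Finset.induction with
  | empty => simp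
  | insert a s hx ih =>
    rw [Finset.sup_insert, Finset.sum_insert hx]
    exact le_trans (finrank_sup_le' _ _) (by omega)

theorem nullspace_of_attention_heads
    {d dh h N : ℕ} (hd : 0 < d) (hdh : 0 < dh) (hN : 0 < N)
    (hh : 2 ≤ h) (hhd : h * dh ≤ d)
    (Q K V : Fin h → Matrix (Fin d) (Fin dh) ℝ)
    (h1 : ∀ i, (Q i * (K i)ᵀ)ᵀ = Q i * (K i)ᵀ)
    (h2 : ∀ i, rowSpace (V i)ᵀ ≤ rowSpace (Q i * (K i)ᵀ))
    (h3 : ∃ m m' : Fin h, m ≠ m' ∧ ∃ k : Fin d,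
      (Q m * (K m)ᵀ) k ≠ 0 ∧ (Q m * (K m)ᵀ) k ∈ rowSpace (Q m' * (K m')ᵀ)) :
    ∃ W : Matrix (Fin N) (Fin d) ℝ, W ≠ 0 ∧
      ∀ (i : Fin h) (X : Matrix (Fin N) (Fin d) ℝ),
        attnHead (Q i) (K i) (V i) (X + W) = attnHead (Q i) (K i) (V i) X := by
  classical
  set A : Fin h → Matrix (Fin d) (Fin d) ℝ := fun i => Q i * (K i)ᵀ with hA
  set S : Fin h → Submodule ℝ (Fin d → ℝ) := fun i => Submodule.span ℝ (Set.range (A i)) with hS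
  have hrs : ∀ i, rowSpace (A i) = S i := fun i => rowSpace_eq_span (A i)
  -- each S i has finrank ≤ dh
  have hfr : ∀ i, Module.finrank ℝ (S i) ≤ dh := by
    intro i
    have hsym : rowSpace (A i) = LinearMap.range (Matrix.mulVecLin (A i)) := by
      rw [rowSpace, h1 i]
    have hle : LinearMap.range (Matrix.mulVecLin (A i)) ≤
        LinearMap.range (Matrix.mulVecLin (Q i)) := by
      rw [hA, Matrix.mulVecLin_mul]
      exact LinearMap.range_comp_le_range _ _
    calc Module.finrank ℝ (S i) = Module.finrank ℝ (LinearMap.range (Matrix.mulVecLin (A i))) := by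
          rw [← hrs i, hsym]
      _ ≤ Module.finrank ℝ (LinearMap.range (Matrix.mulVecLin (Q i))) :=
          Submodule.finrank_mono hle
      _ ≤ Module.finrank ℝ (Fin dh → ℝ) := (Matrix.mulVecLin (Q i)).finrank_range_le
      _ = dh := by simp
  obtain ⟨m, m', hmm, k, hk0, hkmem⟩ := h3
  -- S m ⊓ S m' is nontrivial
  have hv : A m k ∈ S m ⊓ S m' := by
    constructor
    · exact Submodule.subset_span ⟨k, rfl⟩
    · rw [← hrs m']; exact hkmem
  have hinf : 0 < Module.finrank ℝ ↥(S m ⊓ S m') :=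
    Module.finrank_pos_iff_exists_ne_zero.mpr ⟨⟨A m k, hv⟩, by
      simp only [ne_eq, Submodule.mk_eq_zero]; exact hk0⟩
  have hsup2 : Module.finrank ℝ ↥(S m ⊔ S m') + 1 ≤ 2 * dh := by
    have := Submodule.finrank_sup_add_finrank_inf_eq (S m) (S m')
    have h1' := hfr m; have h2' := hfr m'
    omega
  -- total finrank bound
  set t : Finset (Fin h) := Finset.univ \ {m, m'} with ht
  have hcardt : t.card = h - 2 := by
    rw [ht, Finset.card_sdiff_of_subset (Finset.subset_univ _)]
    simp [Finset.card_insert_of_notMem, hmm]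
  have hsumt : ∑ i ∈ t, Module.finrank ℝ (S i) ≤ (h - 2) * dh := by
    calc ∑ i ∈ t, Module.finrank ℝ (S i) ≤ ∑ _i ∈ t, dh := Finset.sum_le_sum fun i _ => hfr i
      _ = (h - 2) * dh := by rw [Finset.sum_const, hcardt, smul_eq_mul]
  have hunion : ({m, m'} : Finset (Fin h)) ∪ t = Finset.univ := by
    rw [ht, Finset.union_sdiff_of_subset (Finset.subset_univ _)]
  have hsupall : (Finset.univ : Finset (Fin h)).sup S = (S m ⊔ S m') ⊔ t.sup S := by
    rw [← hunion, Finset.sup_union]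
    congr 1
    simp [Finset.sup_insert]
  have hT : Module.finrank ℝ ↥((Finset.univ : Finset (Fin h)).sup S) < d := by
    rw [hsupall]
    have h1' := finrank_sup_le' (S m ⊔ S m') (t.sup S)
    have h2' := finrank_finset_sup_le t S
    have h3' : (h - 2) * dh = h * dh - 2 * dh := by rw [Nat.sub_mul]
    have h4' : 2 * dh ≤ h * dh := Nat.mul_le_mul_right dh hh
    omega
  -- the big matrix of all rows
  set Mbig : Matrix (Fin h × Fin d) (Fin d) ℝ := Matrix.of (fun p => A p.1 p.2) with hMbig
  have hMrank : Mbig.rank = Module.finrank ℝ ↥((Finset.univ : Finset (Fin h)).sup S) := by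
    rw [← Matrix.rank_transpose]
    have : LinearMap.range (Matrix.mulVecLin Mbigᵀ) = (Finset.univ : Finset (Fin h)).sup S := by
      rw [Matrix.range_mulVecLin]; change Submodule.span ℝ (Set.range Mbig) = _
      have : Set.range Mbig = ⋃ i, Set.range (A i) := by
        ext x
        constructor
        · rintro ⟨⟨i, j⟩, rfl⟩; exact Set.mem_iUnion.mpr ⟨i, j, rfl⟩
        · intro hx
          obtain ⟨i, j, rfl⟩ := Set.mem_iUnion.mp hx
          exact ⟨(i, j), rfl⟩
      rw [this, Submodule.span_iUnion, Finset.sup_eq_iSup]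
      simp [hS]
    rw [Matrix.rank, this]
  -- kernel is nontrivial
  have hker : ∃ w : Fin d → ℝ, w ≠ 0 ∧ Mbig *ᵥ w = 0 := by
    have hrn := LinearMap.finrank_range_add_finrank_ker (Matrix.mulVecLin Mbig)
    have hdom : Module.finrank ℝ (Fin d → ℝ) = d := by simp
    have hrange : Module.finrank ℝ (LinearMap.range (Matrix.mulVecLin Mbig)) = Mbig.rank := rfl
    have hkpos : 0 < Module.finrank ℝ (LinearMap.ker (Matrix.mulVecLin Mbig)) := by
      rw [hrange, hMrank] at hrn
      omega
    obtain ⟨⟨w, hw⟩, hwne⟩ := Module.finrank_pos_iff_exists_ne_zero.mp hkpos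
    refine ⟨w, ?_, hw⟩
    intro hw0
    exact hwne (by simp [hw0])
  obtain ⟨w, hw0, hwker⟩ := hker
  -- w is orthogonal to every S i
  have hdotrow : ∀ i j, A i j ⬝ᵥ w = 0 := by
    intro i j
    have := congrFun hwker (i, j)
    simpa [Matrix.mulVec, hMbig] using this
  have hdot : ∀ i, ∀ v ∈ S i, v ⬝ᵥ w = 0 := by
    intro i v hv
    refine Submodule.span_induction ?_ ?_ ?_ ?_ hv
    · rintro x ⟨j, rfl⟩; exact hdotrow i j
    · simp
    · intro x y _ _ hx hy; rw [add_dotProduct, hx, hy, add_zero]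
    · intro a x _ hx; rw [smul_dotProduct, hx, smul_zero]
  -- build W
  set W : Matrix (Fin N) (Fin d) ℝ := Matrix.of (fun _ l => w l) with hW
  have hWne : W ≠ 0 := by
    intro hW0
    apply hw0
    funext l
    have := congrFun (congrFun hW0 ⟨0, hN⟩) l
    simpa [hW] using this
  refine ⟨W, hWne, ?_⟩
  -- key matrix identities
  have hWA : ∀ i, W * A i = 0 := by
    intro i
    ext j l
    have hsym : ∀ c, A i c l = A i l c := fun c => congrFun (congrFun (h1 i) l) c
    calc (W * A i) j l = ∑ c, w c * A i c l := by
          simp [Matrix.mul_apply, hW]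
      _ = ∑ c, A i l c * w c := by
          refine Finset.sum_congr rfl fun c _ => ?_
          rw [hsym c, mul_comm]
      _ = A i l ⬝ᵥ w := rfl
      _ = 0 := hdotrow i l
    
  have hAW : ∀ i, A i * Wᵀ = 0 := by
    intro i
    have : (A i * Wᵀ)ᵀ = 0 := by
      rw [Matrix.transpose_mul, Matrix.transpose_transpose, h1 i, hWA i]
    calc A i * Wᵀ = ((A i * Wᵀ)ᵀ)ᵀ := by rw [Matrix.transpose_transpose]
      _ = 0 := by rw [this, Matrix.transpose_zero]
  have hWV : ∀ i, W * V i = 0 := by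
    intro i
    ext j c
    have hv : (V i)ᵀ c ∈ S i := by
      rw [← hrs i]
      exact h2 i (by rw [rowSpace_eq_span]; exact Submodule.subset_span ⟨c, rfl⟩)
    calc (W * V i) j c = ∑ l, w l * V i l c := by simp [Matrix.mul_apply, hW]
      _ = (V i)ᵀ c ⬝ᵥ w := by
          refine Finset.sum_congr rfl fun l _ => ?_
          rw [mul_comm]; rfl
      _ = 0 := hdot i _ hv
  intro i X
  have e1 : (X + W) * Q i * (K i)ᵀ * (X + W)ᵀ = X * Q i * (K i)ᵀ * Xᵀ := by
    have assoc : ∀ Y : Matrix (Fin N) (Fin d) ℝ, Y * Q i * (K i)ᵀ = Y * A i := by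
      intro Y; rw [hA, Matrix.mul_assoc]
    rw [assoc, assoc]
    rw [Matrix.add_mul, hWA i, add_zero, Matrix.transpose_add, Matrix.mul_add,
      Matrix.mul_assoc X (A i) Wᵀ, hAW i, Matrix.mul_zero, add_zero]
  have e2 : (X + W) * V i = X * V i := by
    rw [Matrix.add_mul, hWV i, add_zero]
  rw [attnHead, attnHead, e1, e2]
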